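/- For every N ∈ {1, 2, 3, 4}, the group Γ₀(N) is generated by the three matrices P₁ = [[1,1],[0,1]], W_N = [[1,0],[N,1]], and −I = [[−1,0],[0,−1]]. -/

import Mathlib

open Matrix MatrixGroups

lemma aux_balanced (a c : ℤ) (hc : c ≠ 0) : ∃ n : ℤ, 2 * (a + n * c).natAbs ≤ c.natAbs := by
  have key : ∀ a c : ℤ, 0 < c → ∃ n : ℤ, 2 * (a + n * c).natAbs ≤ c.natAbs := by
    intro a c hc
    refine ⟨if 2 * (a % c) ≤ c then -(a / c) else -(a / c) - 1, ?_⟩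
    have h1 := Int.emod_nonneg a hc.ne'
    have h2 := Int.emod_lt_of_pos a hc
    split_ifs with h
    · have key : a + -(a / c) * c = a % c := by rw [Int.emod_def]; ring
      rw [key]; omega
    · have key : a + (-(a / c) - 1) * c = a % c - c := by rw [Int.emod_def]; ring
      rw [key]; omega
  rcases lt_or_gt_of_ne hc with h | h
  · obtain ⟨n, hn⟩ := key a (-c) (by omega)
    exact ⟨-n, by rw [show a + -n * c = a + n * -c by ring]; omega⟩
  · exact key a c h

def auxT : SL(2, ℤ) := ⟨!![1, 1; 0, 1], by norm_num [Matrix.det_fin_two_of]⟩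
def auxW (N : ℕ) : SL(2, ℤ) := ⟨!![1, 0; (N : ℤ), 1], by norm_num [Matrix.det_fin_two_of]⟩
def auxI : SL(2, ℤ) := ⟨!![-1, 0; 0, -1], by norm_num [Matrix.det_fin_two_of]⟩

lemma auxT_zpow (n : ℤ) : (auxT ^ n : SL(2, ℤ)).1 = !![1, n; 0, 1] := by
  have : auxT = ModularGroup.T := Subtype.ext rfl
  rw [this]; exact ModularGroup.coe_T_zpow n

lemma auxW_zpow (N : ℕ) (m : ℤ) : ((auxW N) ^ m : SL(2, ℤ)).1 = !![1, 0; m * N, 1] := by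
  induction m using Int.induction_on with
  | zero => simp [Matrix.one_fin_two]
  | succ n ih =>
      rw [_root_.zpow_add_one, Matrix.SpecialLinearGroup.coe_mul, ih,
        show (auxW N).1 = !![1, 0; (N:ℤ), 1] from rfl, Matrix.mul_fin_two]
      norm_num [add_mul]
  | pred n ih =>
      have h1 : ((auxW N) ^ (-(n:ℤ) - 1)) * auxW N = (auxW N) ^ (-(n:ℤ)) := by
        rw [← _root_.zpow_add_one]; norm_num
      set X : SL(2,ℤ) := ⟨!![1, 0; (-(n:ℤ) - 1) * N, 1], by norm_num [Matrix.det_fin_two_of]⟩ with hX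
      have h2 : X * auxW N = (auxW N) ^ (-(n:ℤ)) := by
        apply Subtype.ext
        rw [Matrix.SpecialLinearGroup.coe_mul, ih, hX,
          show (auxW N).1 = !![1, 0; (N:ℤ), 1] from rfl]
        show !![1, 0; (-(n:ℤ) - 1) * N, 1] * _ = _
        rw [Matrix.mul_fin_two]
        norm_num; ring
      have h3 : (auxW N) ^ (-(n:ℤ) - 1) = X := mul_right_cancel (h1.trans h2.symm)
      rw [h3]

lemma auxT_mul (n : ℤ) (g : SL(2, ℤ)) :
    (auxT ^ n * g).1 = !![g.1 0 0 + n * g.1 1 0, g.1 0 1 + n * g.1 1 1; g.1 1 0, g.1 1 1] := by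
  conv_lhs => rw [Matrix.SpecialLinearGroup.coe_mul, auxT_zpow, Matrix.eta_fin_two g.1,
    Matrix.mul_fin_two]
  norm_num

lemma auxW_mul (N : ℕ) (m : ℤ) (g : SL(2, ℤ)) :
    ((auxW N) ^ m * g).1 = !![g.1 0 0, g.1 0 1;
      g.1 1 0 + m * N * g.1 0 0, g.1 1 1 + m * N * g.1 0 1] := by
  conv_lhs => rw [Matrix.SpecialLinearGroup.coe_mul, auxW_zpow, Matrix.eta_fin_two g.1,
    Matrix.mul_fin_two]
  norm_num [add_comm]

lemma sl_det (g : SL(2, ℤ)) : g.1 0 0 * g.1 1 1 - g.1 0 1 * g.1 1 0 = 1 := by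
  have := g.2
  rwa [Matrix.det_fin_two] at this
/-- For `N ∈ {1,2,3,4}`, the group `Γ₀(N)` is generated by
`P₁ = [[1,1],[0,1]]`, `W_N = [[1,0],[N,1]]` and `-I = [[-1,0],[0,-1]]`. -/
theorem gamma0_small_level_generated (N : ℕ) (hN : N ∈ ({1, 2, 3, 4} : Set ℕ)) :
    Subgroup.closure
      ({⟨!![1, 1; 0, 1], by norm_num [Matrix.det_fin_two_of]⟩,
        ⟨!![1, 0; (N : ℤ), 1], by norm_num [Matrix.det_fin_two_of]⟩,
        ⟨!![-1, 0; 0, -1], by norm_num [Matrix.det_fin_two_of]⟩} : Set SL(2, ℤ)) =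
      CongruenceSubgroup.Gamma0 N := by
  have hset : ({⟨!![1, 1; 0, 1], by norm_num [Matrix.det_fin_two_of]⟩,
        ⟨!![1, 0; (N : ℤ), 1], by norm_num [Matrix.det_fin_two_of]⟩,
        ⟨!![-1, 0; 0, -1], by norm_num [Matrix.det_fin_two_of]⟩} : Set SL(2, ℤ)) =
      {auxT, auxW N, auxI} := rfl
  rw [hset]
  have hN4 : N = 1 ∨ N = 2 ∨ N = 3 ∨ N = 4 := by simpa using hN
  have hTmem : auxT ∈ CongruenceSubgroup.Gamma0 N := by
    rw [CongruenceSubgroup.Gamma0_mem]; simp [auxT]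
  have hWmem : auxW N ∈ CongruenceSubgroup.Gamma0 N := by
    rw [CongruenceSubgroup.Gamma0_mem]; simp [auxW]
  have hImem : auxI ∈ CongruenceSubgroup.Gamma0 N := by
    rw [CongruenceSubgroup.Gamma0_mem]; simp [auxI]
  apply le_antisymm
  · rw [Subgroup.closure_le]
    rintro x (rfl | rfl | rfl) <;> assumption
  · intro g hg
    suffices main : ∀ k : ℕ, ∀ g : SL(2, ℤ), g ∈ CongruenceSubgroup.Gamma0 N →
        (g.1 1 0).natAbs = k → g ∈ Subgroup.closure ({auxT, auxW N, auxI} : Set SL(2, ℤ)) from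
      main _ g hg rfl
    intro k
    induction k using Nat.strong_induction_on with
    | _ k IH =>
    intro g hg hk
    have hT : auxT ∈ Subgroup.closure ({auxT, auxW N, auxI} : Set SL(2, ℤ)) :=
      Subgroup.subset_closure (by simp)
    have hW : auxW N ∈ Subgroup.closure ({auxT, auxW N, auxI} : Set SL(2, ℤ)) :=
      Subgroup.subset_closure (by simp)
    have hI : auxI ∈ Subgroup.closure ({auxT, auxW N, auxI} : Set SL(2, ℤ)) :=
      Subgroup.subset_closure (by simp)
    have hNc : (N : ℤ) ∣ g.1 1 0 := by
      rw [CongruenceSubgroup.Gamma0_mem] at hg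
      exact (ZMod.intCast_zmod_eq_zero_iff_dvd _ N).mp hg
    by_cases hc0 : g.1 1 0 = 0
    · -- lower-left entry is zero
      have hd1 : g.1 0 0 * g.1 1 1 = 1 := by
        have := sl_det g; rw [hc0] at this; linarith
      rcases Int.mul_eq_one_iff_eq_one_or_neg_one.mp hd1 with ⟨ha, hd⟩ | ⟨ha, hd⟩
      · have hgeq : g = auxT ^ (g.1 0 1) := by
          apply Subtype.ext
          rw [auxT_zpow]
          conv_lhs => rw [Matrix.eta_fin_two g.1]
          rw [ha, hd, hc0]
        rw [hgeq]; exact zpow_mem hT _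
      · have hgeq : g = auxI * auxT ^ (-(g.1 0 1)) := by
          apply Subtype.ext
          rw [Matrix.SpecialLinearGroup.coe_mul, auxT_zpow,
            show auxI.1 = !![(-1 : ℤ), 0; 0, -1] from rfl, Matrix.mul_fin_two]
          conv_lhs => rw [Matrix.eta_fin_two g.1]
          rw [ha, hd, hc0]
          norm_num
        rw [hgeq]; exact mul_mem hI (zpow_mem hT _)
    · by_cases hc1 : (g.1 1 0).natAbs = 1
      · -- |c| = 1, so N = 1
        have hNd : N ∣ (g.1 1 0).natAbs := by
          have := Int.natAbs_dvd_natAbs.mpr hNc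
          simpa using this
        have hN1 : N = 1 := by rw [hc1] at hNd; exact Nat.dvd_one.mp hNd
        subst hN1
        set n : ℤ := -(g.1 0 0) * g.1 1 0 with hn
        set g' : SL(2, ℤ) := auxT ^ n * g with hg'
        have hcpm : g.1 1 0 = 1 ∨ g.1 1 0 = -1 := by
          rcases Int.natAbs_eq_iff.mp hc1 with h | h
          · left; exact_mod_cast h
          · right; exact_mod_cast h
        have e1 : g'.1 0 0 = 0 := by
          rw [hg', auxT_mul]
          show g.1 0 0 + n * g.1 1 0 = 0
          rw [hn]
          rcases hcpm with h | h <;> rw [h] <;> ring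
        have e2 : g'.1 1 0 = g.1 1 0 := by rw [hg', auxT_mul]; rfl
        have hdet' := sl_det g'
        rw [e1, e2] at hdet'
        have hb' : g'.1 0 1 * g.1 1 0 = -1 := by linarith
        have hmem' : g' ∈ Subgroup.closure ({auxT, auxW 1, auxI} : Set SL(2, ℤ)) := by
          rcases hcpm with h | h
          · -- c = 1, b' = -1 : g' = T⁻¹ * W * T^(d'-1)
            have hb : g'.1 0 1 = -1 := by rw [h] at hb'; linarith
            obtain ⟨d', hd'⟩ : ∃ d', g'.1 1 1 = d' := ⟨_, rfl⟩
            have hg'eta : g'.1 = !![0, -1; 1, d'] := by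
              conv_lhs => rw [Matrix.eta_fin_two g'.1]
              rw [e1, e2, h, hb, hd']
            have : g' = auxT ^ (-1 : ℤ) * auxW 1 * auxT ^ (d' - 1) := by
              apply Subtype.ext
              rw [hg'eta]
              simp only [Matrix.SpecialLinearGroup.coe_mul, auxT_zpow]
              rw [show (auxW 1).1 = !![(1 : ℤ), 0; 1, 1] by norm_num [auxW],
                Matrix.mul_fin_two, Matrix.mul_fin_two]
              norm_num
            rw [this]
            exact mul_mem (mul_mem (zpow_mem hT _) hW) (zpow_mem hT _)
          · -- c = -1, b' = 1 : g' = -I * (T⁻¹ * W * T^(-d'-1))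
            have hb : g'.1 0 1 = 1 := by rw [h] at hb'; linarith
            obtain ⟨d', hd'⟩ : ∃ d', g'.1 1 1 = d' := ⟨_, rfl⟩
            have hg'eta : g'.1 = !![0, 1; -1, d'] := by
              conv_lhs => rw [Matrix.eta_fin_two g'.1]
              rw [e1, e2, h, hb, hd']
            have : g' = auxI * (auxT ^ (-1 : ℤ) * auxW 1 * auxT ^ (-d' - 1)) := by
              apply Subtype.ext
              rw [hg'eta]
              simp only [Matrix.SpecialLinearGroup.coe_mul, auxT_zpow]
              rw [show (auxW 1).1 = !![(1 : ℤ), 0; 1, 1] by norm_num [auxW],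
                show auxI.1 = !![(-1 : ℤ), 0; 0, -1] from rfl,
                Matrix.mul_fin_two, Matrix.mul_fin_two, Matrix.mul_fin_two]
              norm_num
            rw [this]
            exact mul_mem hI (mul_mem (mul_mem (zpow_mem hT _) hW) (zpow_mem hT _))
        have hgeq : g = (auxT ^ n)⁻¹ * g' := by rw [hg', inv_mul_cancel_left]
        rw [hgeq]
        exact mul_mem (inv_mem (zpow_mem hT _)) hmem'
      · -- |c| ≥ 2 : descent
        obtain ⟨n, hn⟩ := aux_balanced (g.1 0 0) (g.1 1 0) hc0
        set g' : SL(2, ℤ) := auxT ^ n * g with hg'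
        have e1 : g'.1 0 0 = g.1 0 0 + n * g.1 1 0 := by rw [hg', auxT_mul]; rfl
        have e2 : g'.1 1 0 = g.1 1 0 := by rw [hg', auxT_mul]; rfl
        rw [← e1] at hn
        have ha' : g'.1 0 0 ≠ 0 := by
          intro h0
          have hdet' := sl_det g'
          rw [h0, e2] at hdet'
          have : g.1 1 0 ∣ 1 := ⟨-(g'.1 0 1), by linarith⟩
          have := Int.natAbs_dvd_natAbs.mpr this
          rw [Int.natAbs_one] at this
          exact hc1 (Nat.dvd_one.mp this)
        have hNpos : 0 < N := by omega
        have hNa : (N : ℤ) * g'.1 0 0 ≠ 0 :=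
          mul_ne_zero (by exact_mod_cast hNpos.ne') ha'
        obtain ⟨m, hm⟩ := aux_balanced (g.1 1 0) ((N : ℤ) * g'.1 0 0) hNa
        set g'' : SL(2, ℤ) := auxW N ^ m * g' with hg''
        have f1 : g''.1 1 0 = g.1 1 0 + m * ((N : ℤ) * g'.1 0 0) := by
          rw [hg'', auxW_mul]
          show g'.1 1 0 + m * N * g'.1 0 0 = _
          rw [e2]; ring
        rw [← f1] at hm
        have habs : ((N : ℤ) * g'.1 0 0).natAbs = N * (g'.1 0 0).natAbs := by
          rw [Int.natAbs_mul]; simp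
        rw [habs] at hm
        have hlt : (g''.1 1 0).natAbs < (g.1 1 0).natAbs := by
          by_contra hge
          push_neg at hge
          have haa : 1 ≤ (g'.1 0 0).natAbs := by omega
          rcases hN4 with rfl | rfl | rfl | rfl
          · omega
          · omega
          · omega
          · -- N = 4 equality case
            have h4c : 4 ∣ (g.1 1 0).natAbs := by
              have := Int.natAbs_dvd_natAbs.mpr hNc
              simpa using this
            have h2aa : 2 ∣ (g'.1 0 0).natAbs := by omega
            have h2a : (2 : ℤ) ∣ g'.1 0 0 := by
              rw [← Int.natAbs_dvd_natAbs]; simpa using h2aa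
            have h2c : (2 : ℤ) ∣ g.1 1 0 := by
              rw [← Int.natAbs_dvd_natAbs]
              show 2 ∣ (g.1 1 0).natAbs
              omega
            have hdet' := sl_det g'
            rw [e2] at hdet'
            have : (2 : ℤ) ∣ 1 := by
              rw [← hdet']
              exact dvd_sub (h2a.mul_right _) (h2c.mul_left _)
            norm_num at this
        have hg''mem : g'' ∈ CongruenceSubgroup.Gamma0 N :=
          mul_mem (zpow_mem hWmem m) (mul_mem (zpow_mem hTmem n) hg)
        have hmem'' := IH (g''.1 1 0).natAbs (by omega) g'' hg''mem rfl
        have hgeq : g = (auxW N ^ m * auxT ^ n)⁻¹ * g'' := by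
          rw [hg'', hg']; group
        rw [hgeq]
        exact mul_mem (inv_mem (mul_mem (zpow_mem hW m) (zpow_mem hT n))) hmem''
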